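/- Lemma 3.1 (Lindeberg step under sublinear expectation). Let h : ℝ → ℝ be twice continuously differentiable with h, h', h'' bounded, and let ϰ > 0, κ > 0, n ≥ 1. Then for every x ∈ ℝ, Ê[h(x + ξ(x)/√n)] ≤ E[h(x + Z/√n)] + ϰ(μ̄−μ̲)/(2√n·σ̲) + (κ/(2n))·(σ̄²/σ̲² − 1) + Ê[δ(x, ξ(x)/√n | h)] − E[δ(x, Z/√n | h)], where Z is a standard normal random variable (E its classical expectation) and δ(x, y | h) := h(x+y) − h(x) − y·h'(x) − y²·h''(x)/2. -/

import Mathlib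

open MeasureTheory ProbabilityTheory Set
open scoped ENNReal NNReal

noncomputable section

/-- A sublinear expectation space on a set `H` of real random variables. -/
structure SublinearExp (Ω : Type) where
  H : Set (Ω → ℝ)
  E : (Ω → ℝ) → ℝ
  const_mem : ∀ c : ℝ, (fun _ => c) ∈ H
  add_mem : ∀ {X Y : Ω → ℝ}, X ∈ H → Y ∈ H → X + Y ∈ H
  smul_mem : ∀ (c : ℝ) {X : Ω → ℝ}, X ∈ H → c • X ∈ H
  mono : ∀ {X Y : Ω → ℝ}, X ∈ H → Y ∈ H → (∀ ω, X ω ≤ Y ω) → E X ≤ E Y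
  const_eq : ∀ c : ℝ, E (fun _ => c) = c
  subadd : ∀ {X Y : Ω → ℝ}, X ∈ H → Y ∈ H → E (X + Y) ≤ E X + E Y
  homog : ∀ {c : ℝ}, 0 ≤ c → ∀ {X : Ω → ℝ}, X ∈ H → E (c • X) = c * E X

variable {Ω : Type}

/-- Upper expectation `Ê[Y]` of an arbitrary function, with value `+∞` if no dominating
element of `H` exists (`EReal`-valued). -/
def SublinearExp.uexpE (SE : SublinearExp Ω) (Y : Ω → ℝ) : EReal :=
  sInf {r : EReal | ∃ X ∈ SE.H, (∀ ω, Y ω ≤ X ω) ∧ r = (SE.E X : EReal)}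

def muLow (SE : SublinearExp Ω) (X₀ : Ω → ℝ) : ℝ := -(SE.E fun ω => -X₀ ω)
def muHigh (SE : SublinearExp Ω) (X₀ : Ω → ℝ) : ℝ := SE.E X₀
def varLow (SE : SublinearExp Ω) (X₀ : Ω → ℝ) (μ : ℝ) : ℝ :=
  -(SE.E fun ω => -((X₀ ω - μ) ^ 2))
def varHigh (SE : SublinearExp Ω) (X₀ : Ω → ℝ) (μ : ℝ) : ℝ :=
  SE.E fun ω => (X₀ ω - μ) ^ 2
def sigLow (SE : SublinearExp Ω) (X₀ : Ω → ℝ) : ℝ :=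
  sInf ((fun μ => Real.sqrt (varLow SE X₀ μ)) '' Set.Icc (muLow SE X₀) (muHigh SE X₀))
def sigHigh (SE : SublinearExp Ω) (X₀ : Ω → ℝ) : ℝ :=
  sSup ((fun μ => Real.sqrt (varHigh SE X₀ μ)) '' Set.Icc (muLow SE X₀) (muHigh SE X₀))

/-- The function `α_ϰ(x|h)` of (3.1)–(3.2), written in terms of `h'`. -/
def alphaF (SE : SublinearExp Ω) (X₀ : Ω → ℝ) (ϰ : ℝ) (h' : ℝ → ℝ) (x : ℝ) : ℝ :=
  if |h' x| ≤ ϰ then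
    (muHigh SE X₀ + muLow SE X₀) / 2 + (muHigh SE X₀ - muLow SE X₀) / 2 * (h' x / ϰ)
  else if ϰ < h' x then muHigh SE X₀
  else muLow SE X₀

/-- The function `β_{ϰ,κ}(x|h)` of (3.3)–(3.4), written in terms of `h'` and `h''`. -/
def betaF (SE : SublinearExp Ω) (X₀ : Ω → ℝ) (ϰ κ : ℝ) (h' h'' : ℝ → ℝ) (x : ℝ) : ℝ :=
  Real.sqrt (
    if |h'' x| ≤ κ then
      (varHigh SE X₀ (alphaF SE X₀ ϰ h' x) + varLow SE X₀ (alphaF SE X₀ ϰ h' x)) / 2 +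
        (varHigh SE X₀ (alphaF SE X₀ ϰ h' x) - varLow SE X₀ (alphaF SE X₀ ϰ h' x)) / 2 *
          (h'' x / κ)
    else if κ < h'' x then varHigh SE X₀ (alphaF SE X₀ ϰ h' x)
    else varLow SE X₀ (alphaF SE X₀ ϰ h' x))

/-- `ξ(x) = (X₀ - α_ϰ(x|h))/β_{ϰ,κ}(x|h)`. -/
def xiF (SE : SublinearExp Ω) (X₀ : Ω → ℝ) (ϰ κ : ℝ) (h' h'' : ℝ → ℝ) (x : ℝ) (ω : Ω) : ℝ :=
  (X₀ ω - alphaF SE X₀ ϰ h' x) / betaF SE X₀ ϰ κ h' h'' x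


section Gauss
open Real
lemma pdf01 (x : ℝ) : gaussianPDFReal 0 1 x = (Real.sqrt (2 * Real.pi))⁻¹ * Real.exp (-x ^ 2 / 2) := by
  simp [gaussianPDFReal]

lemma integrable_id_mul_exp : Integrable (fun x : ℝ => x * Real.exp (-x ^ 2 / 2)) := by
  have := integrable_mul_exp_neg_mul_sq (b := (1/2 : ℝ)) (by norm_num)
  convert this using 2 with x
  ring_nf

lemma integrable_exp_half : Integrable (fun x : ℝ => Real.exp (-x ^ 2 / 2)) := by
  have := integrable_exp_neg_mul_sq (b := (1/2 : ℝ)) (by norm_num)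
  convert this using 2 with x
  ring_nf

lemma integrable_sq_mul_exp : Integrable (fun x : ℝ => x ^ 2 * Real.exp (-x ^ 2 / 2)) := by
  have hb : (0:ℝ) < 1/4 := by norm_num
  refine (integrable_exp_neg_mul_sq hb).const_mul 4 |>.mono' ?_ ?_
  · exact (continuous_pow 2).mul (Real.continuous_exp.comp (by continuity)) |>.aestronglyMeasurable
  · refine Filter.Eventually.of_forall fun x => ?_
    have h1 : x ^ 2 / 4 ≤ Real.exp (x ^ 2 / 4) := (Real.add_one_le_exp _).trans' (by linarith)
    have h2 : Real.exp (x^2/4) * Real.exp (-x^2/2) = Real.exp (-x^2/4) := by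
      rw [← Real.exp_add]; ring_nf
    have h3 : (0:ℝ) < Real.exp (-x^2/2) := Real.exp_pos _
    have : x ^ 2 * Real.exp (-x ^ 2 / 2) ≤ 4 * Real.exp (-x^2/4) := by
      calc x ^ 2 * Real.exp (-x ^ 2 / 2) ≤ (4 * Real.exp (x^2/4)) * Real.exp (-x ^ 2 / 2) := by
            nlinarith [h3, h1]
        _ = 4 * Real.exp (-x^2/4) := by rw [mul_assoc, h2]
    rw [Real.norm_eq_abs, abs_of_nonneg (by positivity)]
    convert this using 2
    ring_nf

lemma int_id_exp_zero : ∫ x : ℝ, x * Real.exp (-x ^ 2 / 2) = 0 := by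
  have hderiv : ∀ x : ℝ, HasDerivAt (fun y : ℝ => -Real.exp (-y ^ 2 / 2))
      (x * Real.exp (-x ^ 2 / 2)) x := by
    intro x
    have h1 : HasDerivAt (fun y : ℝ => -y ^ 2 / 2) (-x) x := by
      have := HasDerivAt.div_const (HasDerivAt.fun_neg (hasDerivAt_pow 2 x)) 2
      refine this.congr_deriv ?_
      push_cast; ring
    have := HasDerivAt.fun_neg (h1.exp)
    refine this.congr_deriv ?_
    ring
  have hF : Integrable (fun y : ℝ => -Real.exp (-y ^ 2 / 2)) := integrable_exp_half.neg
  exact integral_eq_zero_of_hasDerivAt_of_integrable hderiv integrable_id_mul_exp hF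

lemma int_sq_exp : ∫ x : ℝ, (x ^ 2 - 1) * Real.exp (-x ^ 2 / 2) = 0 := by
  have hderiv : ∀ x : ℝ, HasDerivAt (fun y : ℝ => -y * Real.exp (-y ^ 2 / 2))
      ((x ^ 2 - 1) * Real.exp (-x ^ 2 / 2)) x := by
    intro x
    have h1 : HasDerivAt (fun y : ℝ => -y ^ 2 / 2) (-x) x := by
      have := HasDerivAt.div_const (HasDerivAt.fun_neg (hasDerivAt_pow 2 x)) 2
      refine this.congr_deriv ?_
      push_cast; ring
    have h2 : HasDerivAt (fun y : ℝ => Real.exp (-y ^ 2 / 2)) (Real.exp (-x^2/2) * (-x)) x := h1.exp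
    have := HasDerivAt.fun_mul (HasDerivAt.fun_neg (hasDerivAt_id x)) h2
    refine this.congr_deriv ?_
    simp only [id]
    ring
  have hI : Integrable (fun x : ℝ => (x ^ 2 - 1) * Real.exp (-x ^ 2 / 2)) := by
    have := integrable_sq_mul_exp.sub integrable_exp_half
    convert this using 2 with x
    simp only [Pi.sub_apply]
    ring
  have hG : Integrable (fun y : ℝ => -y * Real.exp (-y ^ 2 / 2)) := by
    have := integrable_id_mul_exp.neg
    convert this using 2 with x
    simp only [Pi.neg_apply]
    ring
  exact integral_eq_zero_of_hasDerivAt_of_integrable hderiv hI hG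


lemma gauss_repr : gaussianReal 0 1
    = MeasureTheory.volume.withDensity (fun x => ((gaussianPDFReal 0 1 x).toNNReal : ℝ≥0∞)) := by
  rw [gaussianReal_of_var_ne_zero 0 one_ne_zero]
  rfl

lemma pdf_meas : Measurable (fun x => (gaussianPDFReal 0 1 x).toNNReal) :=
  (measurable_gaussianPDFReal 0 1).real_toNNReal

lemma integral_gauss (g : ℝ → ℝ) :
    ∫ z, g z ∂(gaussianReal 0 1) = ∫ x, gaussianPDFReal 0 1 x * g x := by
  rw [gauss_repr, integral_withDensity_eq_integral_smul pdf_meas g]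
  congr 1
  funext x
  simp [NNReal.smul_def, Real.coe_toNNReal _ (gaussianPDFReal_nonneg 0 1 x)]

lemma integrable_gauss_iff (g : ℝ → ℝ) :
    Integrable g (gaussianReal 0 1) ↔ Integrable (fun x => gaussianPDFReal 0 1 x * g x) := by
  rw [gauss_repr, integrable_withDensity_iff_integrable_smul pdf_meas]
  apply integrable_congr
  refine Filter.Eventually.of_forall fun x => ?_
  simp [NNReal.smul_def, Real.coe_toNNReal _ (gaussianPDFReal_nonneg 0 1 x)]

lemma integrable_gauss_id : Integrable (fun z : ℝ => z) (gaussianReal 0 1) := by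
  rw [integrable_gauss_iff]
  have : (fun x : ℝ => gaussianPDFReal 0 1 x * x)
      = fun x => (Real.sqrt (2 * Real.pi))⁻¹ * (x * Real.exp (-x ^ 2 / 2)) := by
    funext x; rw [pdf01]; ring
  rw [this]
  exact integrable_id_mul_exp.const_mul _

lemma integrable_gauss_sq : Integrable (fun z : ℝ => z ^ 2) (gaussianReal 0 1) := by
  rw [integrable_gauss_iff]
  have : (fun x : ℝ => gaussianPDFReal 0 1 x * x ^ 2)
      = fun x => (Real.sqrt (2 * Real.pi))⁻¹ * (x ^ 2 * Real.exp (-x ^ 2 / 2)) := by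
    funext x; rw [pdf01]; ring
  rw [this]
  exact integrable_sq_mul_exp.const_mul _

lemma int_gauss_id : ∫ z, z ∂(gaussianReal 0 1) = 0 := by
  rw [integral_gauss]
  have : (fun x : ℝ => gaussianPDFReal 0 1 x * x)
      = fun x => (Real.sqrt (2 * Real.pi))⁻¹ * (x * Real.exp (-x ^ 2 / 2)) := by
    funext x; rw [pdf01]; ring
  rw [this, integral_const_mul, int_id_exp_zero, mul_zero]

lemma int_gauss_sq : ∫ z, z ^ 2 ∂(gaussianReal 0 1) = 1 := by
  rw [integral_gauss]
  have : (fun x : ℝ => gaussianPDFReal 0 1 x * x ^ 2)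
      = fun x => (Real.sqrt (2 * Real.pi))⁻¹ * ((x ^ 2 - 1) * Real.exp (-x ^ 2 / 2))
          + gaussianPDFReal 0 1 x := by
    funext x; rw [pdf01]; ring
  rw [this, integral_add, integral_const_mul, int_sq_exp, mul_zero, zero_add,
    integral_gaussianPDFReal_eq_one 0 one_ne_zero]
  · have hI : Integrable (fun x : ℝ => (x ^ 2 - 1) * Real.exp (-x ^ 2 / 2)) := by
      have := integrable_sq_mul_exp.sub integrable_exp_half
      convert this using 2 with x
      simp only [Pi.sub_apply]; ring
    exact hI.const_mul _
  · exact integrable_gaussianPDFReal 0 1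

end Gauss

section Arith

lemma lin_bound (ϰ μ1 μ2 slo β sn g d : ℝ) (hϰ : 0 < ϰ) (hμ : μ1 ≤ μ2) (hslo : 0 < slo)
    (hβ : slo ≤ β) (hβ0 : 0 < β) (hsn : 0 < sn) (hg0 : 0 ≤ g) (hgκ : g ≤ ϰ)
    (hd1 : 0 ≤ d) (hd2 : d ≤ (μ2 - μ1) / 2) :
    g / (β * sn) * d ≤ ϰ * (μ2 - μ1) / (2 * sn * slo) := by
  rw [div_mul_eq_mul_div, div_le_div_iff₀ (by positivity) (by positivity)]
  have key1 : g * d ≤ ϰ * ((μ2 - μ1) / 2) := mul_le_mul hgκ hd2 hd1 hϰ.le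
  nlinarith [mul_le_mul_of_nonneg_right key1 (show (0:ℝ) ≤ 2 * sn * slo by positivity),
    mul_le_mul_of_nonneg_left hβ (show (0:ℝ) ≤ ϰ * (μ2 - μ1) * sn from
      mul_nonneg (mul_nonneg hϰ.le (by linarith)) hsn.le)]

lemma quad_bound (κ nn slo shi B u g : ℝ) (hκ : 0 < κ) (hn : 0 < nn) (hslo : 0 < slo)
    (hsB : slo ^ 2 ≤ B) (hshis : slo ^ 2 ≤ shi ^ 2)
    (hkey : g * (u - B) * slo ^ 2 ≤ κ * (shi ^ 2 - slo ^ 2) * B) :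
    g * u / (2 * nn * B) ≤ g / (2 * nn) + κ / (2 * nn) * (shi ^ 2 / slo ^ 2 - 1) := by
  have hB : 0 < B := lt_of_lt_of_le (pow_pos hslo 2) hsB
  have hRHS : g / (2 * nn) + κ / (2 * nn) * (shi ^ 2 / slo ^ 2 - 1)
      = (g * slo ^ 2 + κ * (shi ^ 2 - slo ^ 2)) / (2 * nn * slo ^ 2) := by
    field_simp
  rw [hRHS, div_le_div_iff₀ (by positivity) (by positivity)]
  nlinarith [mul_le_mul_of_nonneg_left hkey (show (0:ℝ) ≤ 2 * nn by positivity)]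

lemma quad_key_pos (κ w v slo shi g : ℝ) (hκ : 0 < κ) (hg0 : 0 ≤ g) (hgκ : g ≤ κ)
    (hw : slo ^ 2 ≤ w) (hwv : w ≤ v) (hv : v ≤ shi ^ 2) (hslo : 0 < slo) :
    g * (v - ((v + w) / 2 + (v - w) / 2 * (g / κ))) * slo ^ 2
      ≤ κ * (shi ^ 2 - slo ^ 2) * ((v + w) / 2 + (v - w) / 2 * (g / κ)) := by
  set B := (v + w) / 2 + (v - w) / 2 * (g / κ) with hB
  have htl : 0 ≤ g / κ := div_nonneg hg0 hκ.le
  have htu : g / κ ≤ 1 := (div_le_one hκ).mpr hgκ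
  have hwB : w ≤ B := by rw [hB]; nlinarith
  have hsB : slo ^ 2 ≤ B := hw.trans hwB
  have e1 : v - B = (v - w) / 2 * (1 - g / κ) := by rw [hB]; ring
  have e3 : g * (1 - g / κ) ≤ κ := by nlinarith [mul_nonneg hg0 htl]
  have e7 : g * (1 - g / κ) * ((v - w) / 2) ≤ κ * ((shi ^ 2 - slo ^ 2) / 2) :=
    mul_le_mul e3 (by nlinarith) (by nlinarith) hκ.le
  calc g * (v - B) * slo ^ 2 = (g * (1 - g / κ) * ((v - w) / 2)) * slo ^ 2 := by rw [e1]; ring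
    _ ≤ (κ * ((shi ^ 2 - slo ^ 2) / 2)) * slo ^ 2 :=
        mul_le_mul_of_nonneg_right e7 (sq_nonneg slo)
    _ ≤ κ * (shi ^ 2 - slo ^ 2) * B := by
        have hK : (0:ℝ) ≤ κ * (shi ^ 2 - slo ^ 2) :=
          mul_nonneg hκ.le (by linarith)
        nlinarith [mul_le_mul_of_nonneg_left
          (show slo ^ 2 / 2 ≤ B by nlinarith [sq_nonneg slo]) hK]

lemma quad_key_neg (κ w v slo shi g : ℝ) (hκ : 0 < κ) (hg0 : g ≤ 0) (hgκ : -κ ≤ g)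
    (hw : slo ^ 2 ≤ w) (hwv : w ≤ v) (hv : v ≤ shi ^ 2) (hslo : 0 < slo) :
    g * (w - ((v + w) / 2 + (v - w) / 2 * (g / κ))) * slo ^ 2
      ≤ κ * (shi ^ 2 - slo ^ 2) * ((v + w) / 2 + (v - w) / 2 * (g / κ)) := by
  set B := (v + w) / 2 + (v - w) / 2 * (g / κ) with hB
  have htl : g / κ ≤ 0 := div_nonpos_of_nonpos_of_nonneg hg0 hκ.le
  have htu : -1 ≤ g / κ := by rw [le_div_iff₀ hκ]; linarith
  have hwB : w ≤ B := by rw [hB]; nlinarith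
  have hsB : slo ^ 2 ≤ B := hw.trans hwB
  have e1 : w - B = -((v - w) / 2 * (1 + g / κ)) := by rw [hB]; ring
  have e3 : (-g) * (1 + g / κ) ≤ κ := by nlinarith [mul_nonneg (neg_nonneg.mpr hg0) (neg_nonneg.mpr htl)]
  have e7 : (-g) * (1 + g / κ) * ((v - w) / 2) ≤ κ * ((shi ^ 2 - slo ^ 2) / 2) :=
    mul_le_mul e3 (by nlinarith) (by linarith) hκ.le
  calc g * (w - B) * slo ^ 2 = ((-g) * (1 + g / κ) * ((v - w) / 2)) * slo ^ 2 := by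
        rw [e1]; ring
    _ ≤ (κ * ((shi ^ 2 - slo ^ 2) / 2)) * slo ^ 2 :=
        mul_le_mul_of_nonneg_right e7 (sq_nonneg slo)
    _ ≤ κ * (shi ^ 2 - slo ^ 2) * B := by
        have hK : (0:ℝ) ≤ κ * (shi ^ 2 - slo ^ 2) :=
          mul_nonneg hκ.le (by linarith)
        nlinarith [mul_le_mul_of_nonneg_left
          (show slo ^ 2 / 2 ≤ B by nlinarith [sq_nonneg slo]) hK]

end Arith

section Arith2

lemma alpha_mem (ϰ μ1 μ2 g : ℝ) (hϰ : 0 < ϰ) (hμ : μ1 ≤ μ2) (hg : |g| ≤ ϰ) :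
    μ1 ≤ (μ2 + μ1) / 2 + (μ2 - μ1) / 2 * (g / ϰ) ∧
      (μ2 + μ1) / 2 + (μ2 - μ1) / 2 * (g / ϰ) ≤ μ2 := by
  rw [abs_le] at hg
  have h1 : -1 ≤ g / ϰ := by rw [le_div_iff₀ hϰ]; linarith
  have h2 : g / ϰ ≤ 1 := by rw [div_le_one hϰ]; linarith
  constructor <;> nlinarith

lemma alpha_gap_pos (ϰ μ1 μ2 g : ℝ) (hϰ : 0 < ϰ) (hμ : μ1 ≤ μ2) (hg0 : 0 ≤ g) (hg : g ≤ ϰ) :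
    0 ≤ μ2 - ((μ2 + μ1) / 2 + (μ2 - μ1) / 2 * (g / ϰ)) ∧
      μ2 - ((μ2 + μ1) / 2 + (μ2 - μ1) / 2 * (g / ϰ)) ≤ (μ2 - μ1) / 2 := by
  have h1 : 0 ≤ g / ϰ := div_nonneg hg0 hϰ.le
  have h2 : g / ϰ ≤ 1 := by rw [div_le_one hϰ]; linarith
  constructor <;> nlinarith

lemma alpha_gap_neg (ϰ μ1 μ2 g : ℝ) (hϰ : 0 < ϰ) (hμ : μ1 ≤ μ2) (hg0 : g ≤ 0) (hg : -ϰ ≤ g) :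
    0 ≤ ((μ2 + μ1) / 2 + (μ2 - μ1) / 2 * (g / ϰ)) - μ1 ∧
      ((μ2 + μ1) / 2 + (μ2 - μ1) / 2 * (g / ϰ)) - μ1 ≤ (μ2 - μ1) / 2 := by
  have h1 : -1 ≤ g / ϰ := by rw [le_div_iff₀ hϰ]; linarith
  have h2 : g / ϰ ≤ 0 := div_nonpos_of_nonpos_of_nonneg hg0 hϰ.le
  constructor <;> nlinarith

lemma beta_mem (κ w v g : ℝ) (hκ : 0 < κ) (hwv : w ≤ v) (hg : |g| ≤ κ) :
    w ≤ (v + w) / 2 + (v - w) / 2 * (g / κ) ∧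
      (v + w) / 2 + (v - w) / 2 * (g / κ) ≤ v := by
  rw [abs_le] at hg
  have h1 : -1 ≤ g / κ := by rw [le_div_iff₀ hκ]; linarith
  have h2 : g / κ ≤ 1 := by rw [div_le_one hκ]; linarith
  constructor <;> nlinarith

end Arith2

section SEaux

variable {Ω : Type} (SE : SublinearExp Ω)

lemma SE_E_add_const (X : Ω → ℝ) (hX : X ∈ SE.H) (c : ℝ) :
    SE.E (fun ω => X ω + c) = SE.E X + c := by
  have hmem : (fun ω => X ω + c) ∈ SE.H := SE.add_mem hX (SE.const_mem c)
  have h1 : SE.E (fun ω => X ω + c) ≤ SE.E X + c := by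
    have h := SE.subadd hX (SE.const_mem c)
    rw [SE.const_eq] at h
    exact h
  have h2 : SE.E X ≤ SE.E (fun ω => X ω + c) + -c := by
    have h := SE.subadd hmem (SE.const_mem (-c))
    rw [SE.const_eq] at h
    have e : (fun ω => X ω + c) + (fun _ => -c) = X := by
      funext ω; simp [Pi.add_apply]
    rwa [e] at h
  linarith

lemma SE_E_smul (c : ℝ) (hc : 0 ≤ c) (X : Ω → ℝ) (hX : X ∈ SE.H) :
    SE.E (fun ω => c * X ω) = c * SE.E X :=
  SE.homog hc hX

lemma SE_uexpE_le {Y X : Ω → ℝ} (hX : X ∈ SE.H) (h : ∀ ω, Y ω ≤ X ω) :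
    SE.uexpE Y ≤ (SE.E X : EReal) :=
  sInf_le ⟨X, hX, h, rfl⟩

lemma SE_uexpE_chain {A : Ω → ℝ} (hA : A ∈ SE.H) (f : Ω → ℝ) :
    SE.uexpE f ≤ (SE.E A : EReal) + SE.uexpE (fun ω => f ω - A ω) := by
  have h1 : SE.uexpE f - (SE.E A : EReal) ≤ SE.uexpE (fun ω => f ω - A ω) := by
    apply le_sInf
    rintro r ⟨X, hX, hle, rfl⟩
    rw [EReal.sub_le_iff_le_add (Or.inl (EReal.coe_ne_bot _)) (Or.inl (EReal.coe_ne_top _))]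
    have hdom : SE.uexpE f ≤ ((SE.E (X + A)) : EReal) := by
      refine SE_uexpE_le SE (SE.add_mem hX hA) fun ω => ?_
      have h3 : f ω - A ω ≤ X ω := hle ω
      simp only [Pi.add_apply]
      linarith
    refine hdom.trans ?_
    have h2 : SE.E (X + A) ≤ SE.E X + SE.E A := SE.subadd hX hA
    rw [← EReal.coe_add]
    exact_mod_cast h2
  have := (EReal.sub_le_iff_le_add (Or.inl (EReal.coe_ne_bot _))
    (Or.inl (EReal.coe_ne_top _))).mp h1
  rwa [add_comm] at this

end SEaux

set_option maxHeartbeats 1000000 in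
/-- **Lemma 3.1** (Lindeberg step under sublinear expectation): with the Taylor remainder
`δ(x,y|h) = h(x+y) - h(x) - y h'(x) - y² h''(x)/2`, one has
`Ê[h(x + ξ(x)/√n)] ≤ E[h(x + Z/√n)] + ϰ(μ̄-μ̲)/(2√n σ̲) + (κ/2n)(σ̄²/σ̲² - 1)
  + Ê[δ(x, ξ(x)/√n | h)] - E[δ(x, Z/√n | h)]`. -/
theorem lindeberg_step_sublinear
    {Ω : Type} (SE : SublinearExp Ω) (X₀ : Ω → ℝ)
    (hX₀ : X₀ ∈ SE.H) (hX₀sq : (fun ω => (X₀ ω) ^ 2) ∈ SE.H)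
    (hσlow : 0 < sigLow SE X₀)
    (hσhigh : BddAbove
      ((fun μ => Real.sqrt (varHigh SE X₀ μ)) '' Set.Icc (muLow SE X₀) (muHigh SE X₀)))
    (h h' h'' : ℝ → ℝ)
    (hd1 : ∀ x, HasDerivAt h (h' x) x) (hd2 : ∀ x, HasDerivAt h' (h'' x) x)
    (hcont : Continuous h'')
    (hbound : ∃ M, ∀ x, |h x| ≤ M ∧ |h' x| ≤ M ∧ |h'' x| ≤ M)
    (ϰ κ : ℝ) (hϰ : 0 < ϰ) (hκ : 0 < κ) (n : ℕ) (hn : 1 ≤ n) (x : ℝ) :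
    SE.uexpE (fun ω => h (x + xiF SE X₀ ϰ κ h' h'' x ω / Real.sqrt n))
      ≤ (((∫ z, h (x + z / Real.sqrt n) ∂gaussianReal 0 1) +
            ϰ * (muHigh SE X₀ - muLow SE X₀) / (2 * Real.sqrt n * sigLow SE X₀) +
            κ / (2 * n) * (sigHigh SE X₀ ^ 2 / sigLow SE X₀ ^ 2 - 1) -
            ∫ z, (h (x + z / Real.sqrt n) - h x - (z / Real.sqrt n) * h' x -
              (z / Real.sqrt n) ^ 2 * h'' x / 2) ∂gaussianReal 0 1 : ℝ) : EReal) +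
          SE.uexpE (fun ω =>
            h (x + xiF SE X₀ ϰ κ h' h'' x ω / Real.sqrt n) - h x -
              (xiF SE X₀ ϰ κ h' h'' x ω / Real.sqrt n) * h' x -
              (xiF SE X₀ ϰ κ h' h'' x ω / Real.sqrt n) ^ 2 * h'' x / 2) := by
  have hn0 : (0:ℝ) < (n:ℝ) := by exact_mod_cast Nat.lt_of_lt_of_le Nat.zero_lt_one hn
  set sn := Real.sqrt (n:ℝ) with hsn
  have hsnpos : 0 < sn := Real.sqrt_pos.mpr hn0
  have hsn2 : sn ^ 2 = (n:ℝ) := Real.sq_sqrt hn0.le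
  set μ1 := muLow SE X₀ with hμ1
  set μ2 := muHigh SE X₀ with hμ2
  set slo := sigLow SE X₀ with hslo
  set shi := sigHigh SE X₀ with hshi
  set α := alphaF SE X₀ ϰ h' x with hα
  -- membership helper
  have memF : ∀ (g : Ω → ℝ) (p q r : ℝ), (∀ ω, g ω = p * X₀ ω ^ 2 + q * X₀ ω + r) →
      g ∈ SE.H := by
    intro g p q r hg
    have hm : (p • (fun ω => (X₀ ω) ^ 2) + q • X₀ + (fun _ => r)) ∈ SE.H :=
      SE.add_mem (SE.add_mem (SE.smul_mem p hX₀sq) (SE.smul_mem q hX₀)) (SE.const_mem r)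
    have e : g = p • (fun ω => (X₀ ω) ^ 2) + q • X₀ + (fun _ => r) := by
      funext ω
      simp only [Pi.add_apply, Pi.smul_apply, smul_eq_mul]
      exact hg ω
    rw [e]; exact hm
  have hmemneg : (fun ω => -X₀ ω) ∈ SE.H := memF _ 0 (-1) 0 (fun ω => by ring)
  have hμle : μ1 ≤ μ2 := by
    have hsub := SE.subadd hX₀ hmemneg
    have e : X₀ + (fun ω => -X₀ ω) = fun _ => (0:ℝ) := by
      funext ω; simp [Pi.add_apply]
    rw [e, SE.const_eq] at hsub
    rw [hμ1, hμ2]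
    simp only [muLow, muHigh]
    linarith
  have hmemsq : ∀ μ : ℝ, (fun ω => (X₀ ω - μ) ^ 2) ∈ SE.H :=
    fun μ => memF _ 1 (-2 * μ) (μ ^ 2) (fun ω => by ring)
  have hmemnsq : ∀ μ : ℝ, (fun ω => -((X₀ ω - μ) ^ 2)) ∈ SE.H :=
    fun μ => memF _ (-1) (2 * μ) (-μ ^ 2) (fun ω => by ring)
  have hvlow_le : ∀ μ : ℝ, varLow SE X₀ μ ≤ varHigh SE X₀ μ := by
    intro μ
    have hsub := SE.subadd (hmemsq μ) (hmemnsq μ)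
    have e : (fun ω => (X₀ ω - μ) ^ 2) + (fun ω => -((X₀ ω - μ) ^ 2)) = fun _ => (0:ℝ) := by
      funext ω; simp [Pi.add_apply]
    rw [e, SE.const_eq] at hsub
    simp only [varLow, varHigh]
    linarith
  have hvlow0 : ∀ μ : ℝ, 0 ≤ varLow SE X₀ μ := by
    intro μ
    have hm := SE.mono (hmemnsq μ) (SE.const_mem 0)
      (fun ω => neg_nonpos.mpr (sq_nonneg _))
    rw [SE.const_eq] at hm
    simp only [varLow]
    linarith
  have hvhigh0 : ∀ μ : ℝ, 0 ≤ varHigh SE X₀ μ := fun μ => (hvlow0 μ).trans (hvlow_le μ)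
  have hαmem : μ1 ≤ α ∧ α ≤ μ2 := by
    rw [hα]
    unfold alphaF
    split_ifs with hc1 hc2
    · exact alpha_mem ϰ μ1 μ2 (h' x) hϰ hμle hc1
    · exact ⟨hμle, le_refl _⟩
    · exact ⟨le_refl _, hμle⟩
  have hslo_le : slo ≤ Real.sqrt (varLow SE X₀ α) := by
    rw [hslo]
    unfold sigLow
    apply csInf_le
    · refine ⟨0, ?_⟩
      rintro y ⟨μ, _, rfl⟩
      exact Real.sqrt_nonneg _
    · exact ⟨α, ⟨hαmem.1, hαmem.2⟩, rfl⟩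
  have hslo2 : slo ^ 2 ≤ varLow SE X₀ α := by
    calc slo ^ 2 ≤ Real.sqrt (varLow SE X₀ α) ^ 2 := pow_le_pow_left₀ hσlow.le hslo_le 2
      _ = varLow SE X₀ α := Real.sq_sqrt (hvlow0 α)
  have hvha : varHigh SE X₀ α ≤ shi ^ 2 := by
    have h1 : Real.sqrt (varHigh SE X₀ α) ≤ shi := by
      rw [hshi]
      unfold sigHigh
      exact le_csSup hσhigh ⟨α, ⟨hαmem.1, hαmem.2⟩, rfl⟩
    calc varHigh SE X₀ α = Real.sqrt (varHigh SE X₀ α) ^ 2 := (Real.sq_sqrt (hvhigh0 α)).symm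
      _ ≤ shi ^ 2 := pow_le_pow_left₀ (Real.sqrt_nonneg _) h1 2
  have hs2 : slo ^ 2 ≤ shi ^ 2 := hslo2.trans ((hvlow_le α).trans hvha)
  have hslosq : (0:ℝ) < slo ^ 2 := pow_pos hσlow 2
  set B := (if |h'' x| ≤ κ then
      (varHigh SE X₀ α + varLow SE X₀ α) / 2 +
        (varHigh SE X₀ α - varLow SE X₀ α) / 2 * (h'' x / κ)
    else if κ < h'' x then varHigh SE X₀ α else varLow SE X₀ α) with hB
  set β := betaF SE X₀ ϰ κ h' h'' x with hβ
  have hβdef : β = Real.sqrt B := by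
    rw [hβ, hB, hα]
    rfl
  have hBbounds : varLow SE X₀ α ≤ B ∧ B ≤ varHigh SE X₀ α := by
    rw [hB]
    split_ifs with hc1 hc2
    · exact beta_mem κ (varLow SE X₀ α) (varHigh SE X₀ α) (h'' x) hκ (hvlow_le α) hc1
    · exact ⟨hvlow_le α, le_refl _⟩
    · exact ⟨le_refl _, hvlow_le α⟩
  have hBpos : 0 < B := lt_of_lt_of_le hslosq (hslo2.trans hBbounds.1)
  have hsloB : slo ^ 2 ≤ B := hslo2.trans hBbounds.1
  have hβpos : 0 < β := by rw [hβdef]; exact Real.sqrt_pos.mpr hBpos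
  have hβsq : β ^ 2 = B := by rw [hβdef]; exact Real.sq_sqrt hBpos.le
  have hsloβ : slo ≤ β := by
    rw [hβdef, show slo = Real.sqrt (slo ^ 2) from (Real.sqrt_sq hσlow.le).symm]
    exact Real.sqrt_le_sqrt hsloB
  have hξ : ∀ ω, xiF SE X₀ ϰ κ h' h'' x ω = (X₀ ω - α) / β := by
    intro ω
    rw [xiF, ← hα, ← hβ]
  -- E evaluations
  have hElinPos : ∀ a' : ℝ, 0 ≤ a' → SE.E (fun ω => a' * (X₀ ω - α)) = a' * (μ2 - α) := by
    intro a' ha'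
    rw [show (fun ω => a' * (X₀ ω - α)) = (fun ω => a' * (X₀ ω + -α)) from
      funext fun ω => by ring]
    rw [SE_E_smul SE a' ha' (fun ω => X₀ ω + -α) (memF _ 0 1 (-α) (fun ω => by ring))]
    rw [SE_E_add_const SE X₀ hX₀ (-α)]
    rw [show SE.E X₀ = μ2 from by rw [hμ2]; rfl]
    ring
  have hElinNeg : ∀ a' : ℝ, a' ≤ 0 → SE.E (fun ω => a' * (X₀ ω - α)) = (-a') * (α - μ1) := by
    intro a' ha'
    rw [show (fun ω => a' * (X₀ ω - α)) = (fun ω => (-a') * (-X₀ ω + α)) from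
      funext fun ω => by ring]
    rw [SE_E_smul SE (-a') (neg_nonneg.mpr ha') (fun ω => -X₀ ω + α)
      (memF _ 0 (-1) α (fun ω => by ring))]
    rw [SE_E_add_const SE (fun ω => -X₀ ω) hmemneg α]
    rw [show SE.E (fun ω => -X₀ ω) = -μ1 from by rw [hμ1]; simp [muLow]]
    ring
  have hEquadPos : ∀ c' : ℝ, 0 ≤ c' →
      SE.E (fun ω => c' * (X₀ ω - α) ^ 2) = c' * varHigh SE X₀ α := by
    intro c' hc'
    rw [SE_E_smul SE c' hc' (fun ω => (X₀ ω - α) ^ 2) (hmemsq α)]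
    rfl
  have hEquadNeg : ∀ c' : ℝ, c' ≤ 0 →
      SE.E (fun ω => c' * (X₀ ω - α) ^ 2) = c' * varLow SE X₀ α := by
    intro c' hc'
    rw [show (fun ω => c' * (X₀ ω - α) ^ 2) = (fun ω => (-c') * (-((X₀ ω - α) ^ 2))) from
      funext fun ω => by ring]
    rw [SE_E_smul SE (-c') (neg_nonneg.mpr hc') (fun ω => -((X₀ ω - α) ^ 2)) (hmemnsq α)]
    rw [show SE.E (fun ω => -((X₀ ω - α) ^ 2)) = -(varLow SE X₀ α) from by simp [varLow]]
    ring
  -- Claim 1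
  have herr1 : 0 ≤ ϰ * (μ2 - μ1) / (2 * sn * slo) :=
    div_nonneg (mul_nonneg hϰ.le (by linarith)) (by positivity)
  have claim1 : SE.E (fun ω => h' x / (β * sn) * (X₀ ω - α))
      ≤ ϰ * (μ2 - μ1) / (2 * sn * slo) := by
    by_cases hb1 : |h' x| ≤ ϰ
    · have hα_eq : α = (μ2 + μ1) / 2 + (μ2 - μ1) / 2 * (h' x / ϰ) := by
        rw [hα]
        unfold alphaF
        rw [if_pos hb1]
        try rfl
      by_cases hs : 0 ≤ h' x
      · have haa : 0 ≤ h' x / (β * sn) := div_nonneg hs (by positivity)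
        rw [hElinPos _ haa]
        obtain ⟨hg1, hg2⟩ := alpha_gap_pos ϰ μ1 μ2 (h' x) hϰ hμle hs (abs_le.mp hb1).2
        rw [← hα_eq] at hg1 hg2
        exact lin_bound ϰ μ1 μ2 slo β sn (h' x) (μ2 - α) hϰ hμle hσlow hsloβ hβpos hsnpos
          hs (abs_le.mp hb1).2 hg1 hg2
      · push_neg at hs
        have haneg : h' x / (β * sn) ≤ 0 :=
          div_nonpos_of_nonpos_of_nonneg hs.le (by positivity)
        rw [hElinNeg _ haneg]
        obtain ⟨hg1, hg2⟩ := alpha_gap_neg ϰ μ1 μ2 (h' x) hϰ hμle hs.le (abs_le.mp hb1).1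
        rw [← hα_eq] at hg1 hg2
        rw [show -(h' x / (β * sn)) = (-h' x) / (β * sn) from by ring]
        exact lin_bound ϰ μ1 μ2 slo β sn (-h' x) (α - μ1) hϰ hμle hσlow hsloβ hβpos hsnpos
          (by linarith) (by linarith [(abs_le.mp hb1).1]) hg1 hg2
    · by_cases hb2 : ϰ < h' x
      · have hα_eq : α = μ2 := by
          rw [hα]
          unfold alphaF
          rw [if_neg hb1, if_pos hb2]
          try rfl
        have haa : 0 ≤ h' x / (β * sn) := div_nonneg (by linarith) (by positivity)
        rw [hElinPos _ haa, hα_eq, sub_self, mul_zero]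
        exact herr1
      · have hα_eq : α = μ1 := by
          rw [hα]
          unfold alphaF
          rw [if_neg hb1, if_neg hb2]
          try rfl
        push_neg at hb1 hb2
        have h3 : h' x < -ϰ := by
          rcases lt_abs.mp hb1 with hcase | hcase
          · linarith
          · linarith
        have haneg : h' x / (β * sn) ≤ 0 :=
          div_nonpos_of_nonpos_of_nonneg (by linarith) (by positivity)
        rw [hElinNeg _ haneg, hα_eq, sub_self, mul_zero]
        exact herr1
  -- Claim 2
  have herr2 : 0 ≤ κ / (2 * (n:ℝ)) * (shi ^ 2 / slo ^ 2 - 1) := by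
    apply mul_nonneg (by positivity)
    rw [sub_nonneg, le_div_iff₀ hslosq]
    linarith
  have claim2 : SE.E (fun ω => h'' x / (2 * β ^ 2 * (n:ℝ)) * (X₀ ω - α) ^ 2)
      ≤ h'' x / (2 * (n:ℝ)) + κ / (2 * (n:ℝ)) * (shi ^ 2 / slo ^ 2 - 1) := by
    by_cases hb1 : |h'' x| ≤ κ
    · have hB_eq : B = (varHigh SE X₀ α + varLow SE X₀ α) / 2 +
          (varHigh SE X₀ α - varLow SE X₀ α) / 2 * (h'' x / κ) := by
        rw [hB, if_pos hb1]
      by_cases hs : 0 ≤ h'' x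
      · have hcc : 0 ≤ h'' x / (2 * β ^ 2 * (n:ℝ)) := div_nonneg hs (by positivity)
        rw [hEquadPos _ hcc]
        rw [show h'' x / (2 * β ^ 2 * (n:ℝ)) * varHigh SE X₀ α
            = h'' x * varHigh SE X₀ α / (2 * (n:ℝ) * B) from by rw [hβsq]; ring]
        refine quad_bound κ (n:ℝ) slo shi B (varHigh SE X₀ α) (h'' x) hκ hn0 hσlow
          hsloB hs2 ?_
        have hkey := quad_key_pos κ (varLow SE X₀ α) (varHigh SE X₀ α) slo shi (h'' x)
          hκ hs (abs_le.mp hb1).2 hslo2 (hvlow_le α) hvha hσlow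
        rw [← hB_eq] at hkey
        exact hkey
      · push_neg at hs
        have hcc : h'' x / (2 * β ^ 2 * (n:ℝ)) ≤ 0 :=
          div_nonpos_of_nonpos_of_nonneg hs.le (by positivity)
        rw [hEquadNeg _ hcc]
        rw [show h'' x / (2 * β ^ 2 * (n:ℝ)) * varLow SE X₀ α
            = h'' x * varLow SE X₀ α / (2 * (n:ℝ) * B) from by rw [hβsq]; ring]
        refine quad_bound κ (n:ℝ) slo shi B (varLow SE X₀ α) (h'' x) hκ hn0 hσlow
          hsloB hs2 ?_
        have hkey := quad_key_neg κ (varLow SE X₀ α) (varHigh SE X₀ α) slo shi (h'' x)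
          hκ hs.le (abs_le.mp hb1).1 hslo2 (hvlow_le α) hvha hσlow
        rw [← hB_eq] at hkey
        exact hkey
    · by_cases hb2 : κ < h'' x
      · have hB_eq : B = varHigh SE X₀ α := by
          rw [hB, if_neg hb1, if_pos hb2]
        have hcc : 0 ≤ h'' x / (2 * β ^ 2 * (n:ℝ)) := div_nonneg (by linarith) (by positivity)
        rw [hEquadPos _ hcc]
        have hvpos : (0:ℝ) < varHigh SE X₀ α := hB_eq ▸ hBpos
        rw [show h'' x / (2 * β ^ 2 * (n:ℝ)) * varHigh SE X₀ α = h'' x / (2 * (n:ℝ)) from by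
          rw [hβsq, hB_eq]; field_simp]
        linarith [herr2]
      · have hB_eq : B = varLow SE X₀ α := by
          rw [hB, if_neg hb1, if_neg hb2]
        push_neg at hb1 hb2
        have h3 : h'' x < -κ := by
          rcases lt_abs.mp hb1 with hcase | hcase
          · linarith
          · linarith
        have hcc : h'' x / (2 * β ^ 2 * (n:ℝ)) ≤ 0 :=
          div_nonpos_of_nonpos_of_nonneg (by linarith) (by positivity)
        rw [hEquadNeg _ hcc]
        have hvpos : (0:ℝ) < varLow SE X₀ α := hB_eq ▸ hBpos
        rw [show h'' x / (2 * β ^ 2 * (n:ℝ)) * varLow SE X₀ α = h'' x / (2 * (n:ℝ)) from by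
          rw [hβsq, hB_eq]; field_simp]
        linarith [herr2]
  -- combine E A
  have hmemlin : (fun ω => h' x / (β * sn) * (X₀ ω - α)) ∈ SE.H :=
    memF _ 0 (h' x / (β * sn)) (-(h' x / (β * sn) * α)) (fun ω => by ring)
  have hmemquad : (fun ω => h'' x / (2 * β ^ 2 * (n:ℝ)) * (X₀ ω - α) ^ 2) ∈ SE.H :=
    memF _ (h'' x / (2 * β ^ 2 * (n:ℝ))) (-(2 * (h'' x / (2 * β ^ 2 * (n:ℝ))) * α))
      (h'' x / (2 * β ^ 2 * (n:ℝ)) * α ^ 2) (fun ω => by ring)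
  have hsub' : SE.E (fun ω => h' x / (β * sn) * (X₀ ω - α)
        + h'' x / (2 * β ^ 2 * (n:ℝ)) * (X₀ ω - α) ^ 2)
      ≤ SE.E (fun ω => h' x / (β * sn) * (X₀ ω - α))
        + SE.E (fun ω => h'' x / (2 * β ^ 2 * (n:ℝ)) * (X₀ ω - α) ^ 2) :=
    SE.subadd hmemlin hmemquad
  have hmemA : (fun ω => (h' x / (β * sn) * (X₀ ω - α)
        + h'' x / (2 * β ^ 2 * (n:ℝ)) * (X₀ ω - α) ^ 2) + h x) ∈ SE.H :=
    memF _ (h'' x / (2 * β ^ 2 * (n:ℝ)))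
      (h' x / (β * sn) - 2 * (h'' x / (2 * β ^ 2 * (n:ℝ))) * α)
      (h'' x / (2 * β ^ 2 * (n:ℝ)) * α ^ 2 - h' x / (β * sn) * α + h x) (fun ω => by ring)
  have hEA : SE.E (fun ω => (h' x / (β * sn) * (X₀ ω - α)
        + h'' x / (2 * β ^ 2 * (n:ℝ)) * (X₀ ω - α) ^ 2) + h x)
      = SE.E (fun ω => h' x / (β * sn) * (X₀ ω - α)
        + h'' x / (2 * β ^ 2 * (n:ℝ)) * (X₀ ω - α) ^ 2) + h x :=
    SE_E_add_const SE _
      (memF _ (h'' x / (2 * β ^ 2 * (n:ℝ)))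
        (h' x / (β * sn) - 2 * (h'' x / (2 * β ^ 2 * (n:ℝ))) * α)
        (h'' x / (2 * β ^ 2 * (n:ℝ)) * α ^ 2 - h' x / (β * sn) * α) (fun ω => by ring))
      (h x)
  -- Gaussian side
  have hcont_h : Continuous h :=
    continuous_iff_continuousAt.mpr fun y => (hd1 y).continuousAt
  obtain ⟨M, hM⟩ := hbound
  have hf_int : Integrable (fun z => h (x + z / sn)) (gaussianReal 0 1) := by
    refine Integrable.mono' (integrable_const M) ?_ ?_
    · exact (hcont_h.comp (by continuity)).aestronglyMeasurable
    · exact Filter.Eventually.of_forall fun z => by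
        simpa [Real.norm_eq_abs] using (hM (x + z / sn)).1
  have hp_int2 : Integrable (fun z : ℝ => h x + h' x / sn * z) (gaussianReal 0 1) :=
    (integrable_const (h x)).add (integrable_gauss_id.const_mul _)
  have hp_int : Integrable
      (fun z : ℝ => h x + h' x / sn * z + h'' x / (2 * (n:ℝ)) * z ^ 2) (gaussianReal 0 1) :=
    hp_int2.add (integrable_gauss_sq.const_mul _)
  have heq : (fun z : ℝ => h (x + z / sn) - h x - z / sn * h' x - (z / sn) ^ 2 * h'' x / 2)
      = fun z : ℝ => h (x + z / sn) - (h x + h' x / sn * z + h'' x / (2 * (n:ℝ)) * z ^ 2) := by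
    funext z
    rw [div_pow, hsn2]
    ring
  have hpval : ∫ z, (h x + h' x / sn * z + h'' x / (2 * (n:ℝ)) * z ^ 2) ∂gaussianReal 0 1
      = h x + h'' x / (2 * (n:ℝ)) := by
    rw [integral_add hp_int2 (integrable_gauss_sq.const_mul _),
      integral_add (integrable_const _) (integrable_gauss_id.const_mul _),
      integral_const, integral_const_mul, integral_const_mul, int_gauss_id, int_gauss_sq]
    simp [measure_univ]
  have hInt : (∫ z, h (x + z / sn) ∂gaussianReal 0 1)
      - ∫ z, (h (x + z / sn) - h x - z / sn * h' x - (z / sn) ^ 2 * h'' x / 2) ∂gaussianReal 0 1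
      = h x + h'' x / (2 * (n:ℝ)) := by
    rw [heq, integral_sub hf_int hp_int, hpval]
    ring
  -- final assembly
  have step1 := SE_uexpE_chain SE hmemA
    (fun ω => h (x + xiF SE X₀ ϰ κ h' h'' x ω / sn))
  have heqδ : (fun ω => h (x + xiF SE X₀ ϰ κ h' h'' x ω / sn)
        - ((h' x / (β * sn) * (X₀ ω - α)
          + h'' x / (2 * β ^ 2 * (n:ℝ)) * (X₀ ω - α) ^ 2) + h x))
      = fun ω => h (x + xiF SE X₀ ϰ κ h' h'' x ω / sn) - h x -
          xiF SE X₀ ϰ κ h' h'' x ω / sn * h' x -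
          (xiF SE X₀ ϰ κ h' h'' x ω / sn) ^ 2 * h'' x / 2 := by
    funext ω
    rw [hξ ω, show (2:ℝ) * β ^ 2 * (n:ℝ) = 2 * β ^ 2 * sn ^ 2 from by rw [hsn2]]
    field_simp
    ring
  rw [heqδ] at step1
  refine le_trans step1 ?_
  have hEA_le : SE.E (fun ω => (h' x / (β * sn) * (X₀ ω - α)
        + h'' x / (2 * β ^ 2 * (n:ℝ)) * (X₀ ω - α) ^ 2) + h x)
      ≤ (∫ z, h (x + z / sn) ∂gaussianReal 0 1) + ϰ * (μ2 - μ1) / (2 * sn * slo) +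
        κ / (2 * (n:ℝ)) * (shi ^ 2 / slo ^ 2 - 1) -
        ∫ z, (h (x + z / sn) - h x - z / sn * h' x - (z / sn) ^ 2 * h'' x / 2)
          ∂gaussianReal 0 1 := by
    rw [hEA]
    linarith only [claim1, claim2, hsub', hInt]
  exact add_le_add_left (EReal.coe_le_coe_iff.mpr hEA_le) _

end
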